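/- Frobenius reciprocity holds automatically in the boolean setting: let A, B be boolean algebras, u : B → A a boolean algebra homomorphism, and e : A → B monotone with e ⊣ u (e a ≤ b ↔ a ≤ u b). Then for all a ∈ A, b ∈ B, e(u b ⊓ a) = b ⊓ e a. -/
import Mathlib

theorem frobenius_reciprocity {A B : Type*} [BooleanAlgebra A] [BooleanAlgebra B]
    (u : B → A)
    (hu_inf : ∀ b₁ b₂ : B, u (b₁ ⊓ b₂) = u b₁ ⊓ u b₂)
    (hu_sup : ∀ b₁ b₂ : B, u (b₁ ⊔ b₂) = u b₁ ⊔ u b₂)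
    (hu_top : u ⊤ = ⊤) (hu_bot : u ⊥ = ⊥)
    (hu_compl : ∀ b : B, u bᶜ = (u b)ᶜ)
    (e : A → B) (he : Monotone e)
    (hadj : ∀ (a : A) (b : B), e a ≤ b ↔ a ≤ u b) :
    ∀ (a : A) (b : B), e (u b ⊓ a) = b ⊓ e a := by
  intro a b
  apply le_antisymm
  · exact le_inf ((hadj _ _).2 inf_le_left) (he inf_le_right)
  · -- key: e a ≤ e (u b ⊓ a) ⊔ bᶜ
    have hunit : u b ⊓ a ≤ u (e (u b ⊓ a)) := (hadj _ _).1 le_rfl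
    have h1 : a ≤ u (e (u b ⊓ a) ⊔ bᶜ) := by
      rw [hu_sup, hu_compl]
      calc a ≤ (u b ⊓ a) ⊔ (u b)ᶜ := by
              rw [sup_inf_right]
              simp
        _ ≤ u (e (u b ⊓ a)) ⊔ (u b)ᶜ := sup_le_sup_right hunit _
    have h2 : e a ≤ e (u b ⊓ a) ⊔ bᶜ := (hadj _ _).2 h1
    calc b ⊓ e a ≤ b ⊓ (e (u b ⊓ a) ⊔ bᶜ) := inf_le_inf_left _ h2
      _ ≤ e (u b ⊓ a) := by
          rw [inf_sup_left]
          simp
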